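/- Let A be a densely defined symmetric operator on a Hilbert space H, and B a densely defined operator with D(A) ⊆ D(B) such that for all a > 0 there exists b ≥ 0 with ‖Bu‖ ≤ a‖Au‖ + b‖u‖ for all u ∈ D(A). Then a sequence (uₙ) ⊂ D(A) with uₙ → u and A uₙ Cauchy implies B uₙ is Cauchy; consequently D(closure of A) ⊆ D(closure of (A+B)) and in fact D(closure of A) = D(closure of (A+B)). -/

import Mathlib

open MeasureTheory Filter

section KatoRellichAux

variable {H : Type*} [NormedAddCommGroup H] [InnerProductSpace ℂ H]

private lemma kr_mem_closure_graph_iff (f : H →ₗ.[ℂ] H) (x y : H) :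
    (x, y) ∈ closure (f.graph : Set (H × H)) ↔
      ∃ u : ℕ → f.domain, Tendsto (fun n => ((u n : H))) atTop (nhds x) ∧
        Tendsto (fun n => f (u n)) atTop (nhds y) := by
  rw [mem_closure_iff_seq_limit]
  constructor
  · rintro ⟨s, hs, hlim⟩
    choose u hu1 hu2 using fun n => (f.mem_graph_iff.mp (hs n))
    refine ⟨u, ?_, ?_⟩
    · have h1 : (fun n => ((u n : H))) = fun n => (s n).1 := funext hu1
      rw [h1]
      exact (continuous_fst.tendsto _).comp hlim
    · have h2 : (fun n => f (u n)) = fun n => (s n).2 := funext hu2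
      rw [h2]
      exact (continuous_snd.tendsto _).comp hlim
  · rintro ⟨u, h1, h2⟩
    exact ⟨fun n => ((u n : H), f (u n)), fun n => f.mem_graph (u n), h1.prodMk_nhds h2⟩

private lemma kr_isClosable_of_seq (f : H →ₗ.[ℂ] H)
    (h : ∀ y : H, (0, y) ∈ closure (f.graph : Set (H × H)) → y = 0) : f.IsClosable := by
  refine ⟨f.graph.topologicalClosure.toLinearPMap,
    (Submodule.toLinearPMap_graph_eq _ ?_).symm⟩
  rintro ⟨x, y⟩ hxy (hx : x = 0)
  subst hx
  rw [← SetLike.mem_coe, Submodule.topologicalClosure_coe] at hxy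
  exact h y hxy

private lemma kr_mem_closure_domain_iff {f : H →ₗ.[ℂ] H} (hf : f.IsClosable) (x : H) :
    x ∈ f.closure.domain ↔ ∃ y, (x, y) ∈ closure (f.graph : Set (H × H)) := by
  rw [LinearPMap.mem_domain_iff]
  refine exists_congr fun y => ?_
  rw [← hf.graph_closure_eq_closure_graph, ← SetLike.mem_coe, Submodule.topologicalClosure_coe]

end KatoRellichAux

/-- Kato–Rellich type stability of the closure domain: if `B` is infinitesimally
small with respect to a densely defined symmetric operator `A` (with
`D(A) ⊆ D(B)`), then convergent sequences with `A`-Cauchy images are `B`-Cauchy,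
and the domains of the closures of `A` and `A + B` coincide. -/
theorem kato_rellich_closure_domain
    {H : Type*} [NormedAddCommGroup H] [InnerProductSpace ℂ H] [CompleteSpace H]
    (A B : H →ₗ.[ℂ] H)
    (hAdense : Dense (A.domain : Set H))
    (hBdense : Dense (B.domain : Set H))
    (hsym : ∀ u v : A.domain, (inner ℂ (A u) (v : H) : ℂ) = inner ℂ (u : H) (A v))
    (hsub : A.domain ≤ B.domain)
    (hsmall : ∀ a > (0:ℝ), ∃ b ≥ (0:ℝ), ∀ u : A.domain,
      ‖B ⟨(u : H), hsub u.2⟩‖ ≤ a * ‖A u‖ + b * ‖(u : H)‖) :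
    (∀ (u : ℕ → A.domain) (x : H),
      Filter.Tendsto (fun n => ((u n : H))) Filter.atTop (nhds x) →
      CauchySeq (fun n => A (u n)) →
      CauchySeq (fun n => B ⟨(u n : H), hsub (u n).2⟩)) ∧
    A.closure.domain = (A + B).closure.domain := by
  classical
  obtain ⟨b, hb0, hb⟩ := hsmall (1/2) (by norm_num)
  -- B applied to differences
  have hBsub : ∀ u v : A.domain,
      B ⟨((u - v : A.domain) : H), hsub (u - v).2⟩
        = B ⟨(u : H), hsub u.2⟩ - B ⟨(v : H), hsub v.2⟩ := by
    intro u v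
    have h : (⟨((u - v : A.domain) : H), hsub (u - v).2⟩ : B.domain)
        = ⟨(u : H), hsub u.2⟩ - ⟨(v : H), hsub v.2⟩ := by
      ext; simp
    rw [h, B.map_sub]
  -- part 1: B-Cauchy from A-Cauchy
  have key1 : ∀ (u : ℕ → A.domain) (x : H),
      Tendsto (fun n => ((u n : H))) atTop (nhds x) →
      CauchySeq (fun n => A (u n)) →
      CauchySeq (fun n => B ⟨(u n : H), hsub (u n).2⟩) := by
    intro u x hx hA
    have hu : CauchySeq (fun n => ((u n : H))) := hx.cauchySeq
    rw [cauchySeq_iff_tendsto_dist_atTop_0] at hA hu ⊢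
    refine squeeze_zero (fun p => dist_nonneg) (fun p => ?_)
      (by simpa using (hA.const_mul (1/2 : ℝ)).add (hu.const_mul b))
    rw [dist_eq_norm, dist_eq_norm, dist_eq_norm, ← hBsub, ← A.map_sub]
    simpa using hb (u p.1 - u p.2)
  -- reverse bound : ‖A v‖ in terms of ‖(A+B) v‖
  have hAbound : ∀ v : A.domain,
      ‖A v‖ ≤ 2 * ‖A v + B ⟨(v : H), hsub v.2⟩‖ + 2 * b * ‖(v : H)‖ := by
    intro v
    have h1 := hb v
    have h2 : ‖A v‖ ≤ ‖A v + B ⟨(v : H), hsub v.2⟩‖ + ‖B ⟨(v : H), hsub v.2⟩‖ := by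
      calc ‖A v‖ = ‖(A v + B ⟨(v : H), hsub v.2⟩) - B ⟨(v : H), hsub v.2⟩‖ := by
              rw [add_sub_cancel_right]
        _ ≤ _ := norm_sub_le _ _
    linarith
  -- part 2 key: A-Cauchy from (A+B)-Cauchy
  have key2 : ∀ (u : ℕ → A.domain),
      CauchySeq (fun n => ((u n : H))) →
      CauchySeq (fun n => A (u n) + B ⟨(u n : H), hsub (u n).2⟩) →
      CauchySeq (fun n => A (u n)) := by
    intro u hu hC
    rw [cauchySeq_iff_tendsto_dist_atTop_0] at hC hu ⊢
    refine squeeze_zero (fun p => dist_nonneg) (fun p => ?_)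
      (by simpa using (hC.const_mul (2 : ℝ)).add (hu.const_mul (2 * b)))
    rw [dist_eq_norm, dist_eq_norm, dist_eq_norm]
    have h2 := hAbound (u p.1 - u p.2)
    rw [hBsub, A.map_sub] at h2
    simp only [AddSubgroupClass.coe_sub] at h2
    have h3 : A (u p.1) - A (u p.2)
        + (B ⟨((u p.1 : H)), hsub (u p.1).2⟩ - B ⟨((u p.2 : H)), hsub (u p.2).2⟩)
        = (A (u p.1) + B ⟨((u p.1 : H)), hsub (u p.1).2⟩)
          - (A (u p.2) + B ⟨((u p.2 : H)), hsub (u p.2).2⟩) := by abel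
    rw [h3] at h2
    simpa using h2
  -- closability of A
  have hAc : A.IsClosable := by
    apply kr_isClosable_of_seq
    intro y hy
    rw [kr_mem_closure_graph_iff] at hy
    obtain ⟨u, hu0, huy⟩ := hy
    refine hAdense.eq_zero_of_inner_left (𝕜 := ℂ) fun v' hv' => ?_
    obtain ⟨v, rfl⟩ : ∃ v : A.domain, (v : H) = v' := ⟨⟨v', hv'⟩, rfl⟩
    have h1 : Tendsto (fun n => (inner ℂ (A (u n)) (v : H) : ℂ)) atTop
        (nhds (inner ℂ y (v : H))) := huy.inner tendsto_const_nhds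
    have h2 : Tendsto (fun n => (inner ℂ ((u n : H)) (A v) : ℂ)) atTop
        (nhds (inner ℂ (0 : H) (A v))) := hu0.inner tendsto_const_nhds
    rw [inner_zero_left] at h2
    have h3 : (fun n => (inner ℂ (A (u n)) (v : H) : ℂ))
        = fun n => (inner ℂ ((u n : H)) (A v) : ℂ) := funext fun n => hsym (u n) v
    rw [h3] at h1
    exact tendsto_nhds_unique h1 h2
  -- if (0, y) is in the closure of A's graph, y = 0
  have hAzero : ∀ y : H, (0, y) ∈ closure (A.graph : Set (H × H)) → y = 0 := by
    intro y hy
    rw [← Submodule.topologicalClosure_coe, SetLike.mem_coe,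
      hAc.graph_closure_eq_closure_graph] at hy
    exact A.closure.graph_fst_eq_zero_snd hy rfl
  -- translating sequences in (A+B).domain
  have hdom : ∀ v : (A + B).domain, (v : H) ∈ A.domain := fun v => v.2.1
  have happly : ∀ v : (A + B).domain,
      (A + B) v = A ⟨(v : H), v.2.1⟩ + B ⟨(v : H), hsub v.2.1⟩ :=
    fun v => LinearPMap.add_apply A B v
  -- closability of A + B
  have hABc : (A + B).IsClosable := by
    apply kr_isClosable_of_seq
    intro w hw
    rw [kr_mem_closure_graph_iff] at hw
    obtain ⟨v, hv0, hvw⟩ := hw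
    set u : ℕ → A.domain := fun n => ⟨(v n : H), (v n).2.1⟩ with hu
    have hvu : (fun n => (A + B) (v n))
        = fun n => A (u n) + B ⟨((u n : H)), hsub (u n).2⟩ := funext fun n => happly (v n)
    rw [hvu] at hvw
    have hucauchy : CauchySeq (fun n => A (u n)) :=
      key2 u (hv0.cauchySeq) hvw.cauchySeq
    obtain ⟨y, hy⟩ := cauchySeq_tendsto_of_complete hucauchy
    have hy0 : y = 0 := by
      refine hAzero y ?_
      rw [kr_mem_closure_graph_iff]
      exact ⟨u, hv0, hy⟩
    subst hy0
    -- now ‖B uₙ‖ → 0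
    have hBn : Tendsto (fun n => B ⟨((u n : H)), hsub (u n).2⟩) atTop (nhds 0) := by
      refine tendsto_zero_iff_norm_tendsto_zero.mpr ?_
      refine squeeze_zero (fun n => norm_nonneg _) (fun n => hb (u n)) ?_
      have h1 : Tendsto (fun n => ‖A (u n)‖) atTop (nhds 0) := by
        simpa using hy.norm
      have h2 : Tendsto (fun n => ‖((u n : H))‖) atTop (nhds 0) := by
        simpa using hv0.norm
      simpa using (h1.const_mul (1/2 : ℝ)).add (h2.const_mul b)
    have hBn' : Tendsto (fun n => B ⟨((u n : H)), hsub (u n).2⟩) atTop (nhds w) := by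
      have := hvw.sub hy
      simpa using this
    have := tendsto_nhds_unique hBn' hBn
    exact this
  -- domain equality
  refine ⟨key1, ?_⟩
  ext x
  rw [kr_mem_closure_domain_iff hAc, kr_mem_closure_domain_iff hABc]
  constructor
  · rintro ⟨y, hy⟩
    rw [kr_mem_closure_graph_iff] at hy
    obtain ⟨u, hux, huy⟩ := hy
    have hBc : CauchySeq (fun n => B ⟨((u n : H)), hsub (u n).2⟩) :=
      key1 u x hux huy.cauchySeq
    obtain ⟨z, hz⟩ := cauchySeq_tendsto_of_complete hBc
    refine ⟨y + z, ?_⟩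
    rw [kr_mem_closure_graph_iff]
    refine ⟨fun n => ⟨(u n : H), ⟨(u n).2, hsub (u n).2⟩⟩, hux, ?_⟩
    have : (fun n => (A + B) (⟨(u n : H), ⟨(u n).2, hsub (u n).2⟩⟩ : (A + B).domain))
        = fun n => A (u n) + B ⟨((u n : H)), hsub (u n).2⟩ :=
      funext fun n => happly _
    rw [this]
    exact huy.add hz
  · rintro ⟨w, hw⟩
    rw [kr_mem_closure_graph_iff] at hw
    obtain ⟨v, hvx, hvw⟩ := hw
    set u : ℕ → A.domain := fun n => ⟨(v n : H), (v n).2.1⟩ with hu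
    have hvu : (fun n => (A + B) (v n))
        = fun n => A (u n) + B ⟨((u n : H)), hsub (u n).2⟩ := funext fun n => happly (v n)
    rw [hvu] at hvw
    have hucauchy : CauchySeq (fun n => A (u n)) :=
      key2 u (hvx.cauchySeq) hvw.cauchySeq
    obtain ⟨y, hy⟩ := cauchySeq_tendsto_of_complete hucauchy
    refine ⟨y, ?_⟩
    rw [kr_mem_closure_graph_iff]
    exact ⟨u, hvx, hy⟩
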